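/- Let X, 𝒫, 𝒜, σ be as in the context, and suppose exactly one partition set X₀ is refined into a finite disjoint union X₀ = ⋃_{j=1}^{s} X_{0j} of nonempty subsets, with 𝒜_S the algebra of functions constant on the sets of the refined partition, and both 𝒜 and 𝒜_S invariant under σ and σ⁻¹ (so σ(X₀) = X₀). For a positive integer k let C̃_k := {x ∈ X₀ : k is the smallest positive integer such that x and σᵏ(x) lie in one common X_{0j}}. Then for every n ∈ ℤ, Sepⁿ_{𝒜_S}(X) = Sepⁿ_𝒜(X) ∪ (⋃_{k ∤ n} C̃_k), and the commutants in 𝒜_S⋊_σ̃ℤ satisfy 𝒜_S′ = 𝒜′ \ {Σ_{n} fₙδⁿ ∈ 𝒜′ : fₙ does not vanish identically on C̃_k for some n and some positive integer k with k ∤ n}. -/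

import Mathlib

open scoped Classical

noncomputable section

namespace PaperTRS

/-- The algebra of complex valued functions constant on each set of the family `P`. -/
def partAlg {X J : Type*} (P : J → Set X) : Subalgebra ℂ (X → ℂ) where
  carrier := {h | ∀ i, ∀ x ∈ P i, ∀ y ∈ P i, h x = h y}
  mul_mem' := by
    intro a b ha hb i x hx y hy
    simp only [Pi.mul_apply, ha i x hx y hy, hb i x hx y hy]
  add_mem' := by
    intro a b ha hb i x hx y hy
    simp only [Pi.add_apply, ha i x hx y hy, hb i x hx y hy]
  algebraMap_mem' := by intro r i x hx y hy; rfl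

/-- Piecewise constant functions on `ℝ` whose jumps all lie in the set `T`. -/
def pcAlgOn (T : Set ℝ) : Subalgebra ℂ (ℝ → ℂ) where
  carrier := {h | ∀ x y : ℝ, x ∉ T → y ∉ T →
    (∀ u ∈ T, u ∉ Set.Icc (min x y) (max x y)) → h x = h y}
  mul_mem' := by
    intro a b ha hb x y hx hy hxy
    simp only [Pi.mul_apply, ha x y hx hy hxy, hb x y hx hy hxy]
  add_mem' := by
    intro a b ha hb x y hx hy hxy
    simp only [Pi.add_apply, ha x y hx hy hxy, hb x y hx hy hxy]
  algebraMap_mem' := by intro r x y _ _ _; rfl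

/-- Invariance of an algebra of functions under a self-map of `X`. -/
def AlgInvariant {X : Type*} (A : Subalgebra ℂ (X → ℂ)) (σ : X → X) : Prop :=
  ∀ h ∈ A, (h ∘ σ) ∈ A

/-- `Sep A σ n = {x | ∃ h ∈ A, h x ≠ σ̃ⁿ(h) x}`, where `σ̃ⁿ(h) = h ∘ σ⁻ⁿ`. -/
def Sep {X : Type*} (A : Subalgebra ℂ (X → ℂ)) (σ : Equiv.Perm X) (n : ℤ) : Set X :=
  {x | ∃ h ∈ A, h x ≠ h ((σ ^ n)⁻¹ x)}

/-- Twisted convolution product on the crossed product `⋊ ℤ`: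
`(fₙ δⁿ) * (gₘ δᵐ) = fₙ · σ̃ⁿ(gₘ) · δ^{n+m}` extended bilinearly. -/
def cmul {X : Type*} (σ : Equiv.Perm X) (f g : ℤ →₀ (X → ℂ)) : ℤ →₀ (X → ℂ) :=
  f.sum fun n a => g.sum fun m b =>
    Finsupp.single (n + m) (fun x => a x * b ((σ ^ n)⁻¹ x))

/-- Membership of an element `Σ fₙ δⁿ` in the crossed product of the algebra `B` with `ℤ`. -/
def InCrossed {X : Type*} (B : Subalgebra ℂ (X → ℂ)) (f : ℤ →₀ (X → ℂ)) : Prop :=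
  ∀ n, f n ∈ B

/-- The commutant of `A` inside the crossed product `B ⋊ ℤ` (where `A ⊆ B`). -/
def commutant {X : Type*} (A B : Subalgebra ℂ (X → ℂ)) (σ : Equiv.Perm X) :
    Set (ℤ →₀ (X → ℂ)) :=
  {f | InCrossed B f ∧
    ∀ a ∈ A, cmul σ f (Finsupp.single 0 a) = cmul σ (Finsupp.single 0 a) f}

/-- The jump points `t₁ < ⋯ < t_N` extended by `t₀ = -∞` and `t_{N+1} = +∞`. -/
def tE (N : ℕ) (t : Fin N → ℝ) (i : ℕ) : EReal :=
  if h : 1 ≤ i ∧ i ≤ N then ((t ⟨i - 1, by omega⟩ : ℝ) : EReal)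
  else if i = 0 then ⊥ else ⊤

/-- The open interval `I_i = (t_i, t_{i+1})` for `0 ≤ i ≤ N`. -/
def openPiece (N : ℕ) (t : Fin N → ℝ) (i : ℕ) : Set ℝ :=
  {x : ℝ | tE N t i < (x : EReal) ∧ (x : EReal) < tE N t (i + 1)}

/-- The sets of the partition of `ℝ` determined by the jump points: the open
intervals `I_0, …, I_N` together with the singletons `{t_i}`. -/
def pieces (N : ℕ) (t : Fin N → ℝ) : Set (Set ℝ) :=
  {P | (∃ i : ℕ, i ≤ N ∧ P = openPiece N t i) ∨ (∃ i : Fin N, P = {t i})}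

/-- `C_k`: points `x` such that `k` is the smallest positive integer with `x` and
`σᵏ(x)` in one common set of the partition. -/
def Ck (N : ℕ) (t : Fin N → ℝ) (σ : Equiv.Perm ℝ) (k : ℕ) : Set ℝ :=
  {x | IsLeast {j : ℕ | 0 < j ∧ ∃ P ∈ pieces N t, x ∈ P ∧ (σ ^ j) x ∈ P} k}

end PaperTRS
namespace PaperTRS

/-- With `p` points `s i 0 < ⋯ < s i (p-1)` added in the interval `I_{α i}`, the `j`-th
open subinterval of the refined partition of `I_{α i}`, for `j = 0, …, p`. -/
def subPiece (N : ℕ) (t : Fin N → ℝ) {k p : ℕ} (α : Fin k → ℕ)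
    (s : Fin k → Fin p → ℝ) (i : Fin k) (j : Fin (p + 1)) : Set ℝ :=
  {x : ℝ |
    (if hj : (j : ℕ) = 0 then tE N t (α i)
      else ((s i ⟨(j : ℕ) - 1, by have := j.isLt; omega⟩ : ℝ) : EReal)) < (x : EReal) ∧
    (x : EReal) <
      (if hj : (j : ℕ) = p then tE N t (α i + 1)
        else ((s i ⟨(j : ℕ), by have := j.isLt; omega⟩ : ℝ) : EReal))}

/-- The sets of the refined partition of the union of the intervals `I_{α i}`: the open
subintervals determined by the added jump points together with the singleton jump points. -/
def cyclePieces (N : ℕ) (t : Fin N → ℝ) {k p : ℕ} (α : Fin k → ℕ)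
    (s : Fin k → Fin p → ℝ) : Set (Set ℝ) :=
  {P | (∃ i j, P = subPiece N t α s i j) ∨ (∃ i j, P = ({s i j} : Set ℝ))}

/-- `C̃_r`: points `x` of `⋃ᵢ I_{α i}` such that `r` is the smallest positive integer with
`x` and `σʳ(x)` in one common set of the refined partition. -/
def Ctil (N : ℕ) (t : Fin N → ℝ) (σ : Equiv.Perm ℝ) {k p : ℕ} (α : Fin k → ℕ)
    (s : Fin k → Fin p → ℝ) (r : ℕ) : Set ℝ :=
  {x | x ∈ ⋃ i, openPiece N t (α i) ∧
    IsLeast {j : ℕ | 0 < j ∧ ∃ P ∈ cyclePieces N t α s, x ∈ P ∧ (σ ^ j) x ∈ P} r}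

/-- The cyclic setup: `k` pairwise distinct open intervals `I_{α 0}, …, I_{α (k-1)}` of the
original partition, contained in `C_k` and permuted cyclically by `σ`, with `p` jump points
`s i 0 < ⋯ < s i (p-1)` added into each of them, and both the original algebra `𝒜` and the
refined algebra `𝒜_S` invariant under `σ` and `σ⁻¹`. -/
def CyclicSetup (N : ℕ) (t : Fin N → ℝ) (σ : Equiv.Perm ℝ) {k p : ℕ} (α : Fin k → ℕ)
    (s : Fin k → Fin p → ℝ) : Prop :=
  0 < k ∧ (∀ i, α i ≤ N) ∧ Function.Injective α ∧
  (∀ i j, s i j ∈ openPiece N t (α i)) ∧ (∀ i, StrictMono (s i)) ∧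
  (∀ i : Fin k, ∃ i' : Fin k, ((i' : ℕ) = ((i : ℕ) + 1) % k) ∧
    σ '' openPiece N t (α i) = openPiece N t (α i')) ∧
  (∀ i, openPiece N t (α i) ⊆ Ck N t σ k) ∧
  AlgInvariant (pcAlgOn (Set.range t)) σ ∧
  AlgInvariant (pcAlgOn (Set.range t)) σ.symm ∧
  AlgInvariant (pcAlgOn (Set.range t ∪ ⋃ i, Set.range (s i))) σ ∧
  AlgInvariant (pcAlgOn (Set.range t ∪ ⋃ i, Set.range (s i))) σ.symm

/-- `C_k` for the partition `P` of a general set `X`. -/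
def CkGen {X ι : Type*} (P : ι → Set X) (σ : Equiv.Perm X) (k : ℕ) : Set X :=
  {x | IsLeast {j : ℕ | 0 < j ∧ ∃ i, x ∈ P i ∧ (σ ^ j) x ∈ P i} k}

/-- `C̃_r` relative to a family `Q` of refined pieces inside the subset `base` of `X`. -/
def CtilGen {X ι : Type*} (σ : Equiv.Perm X) (Q : ι → Set X) (base : Set X) (r : ℕ) :
    Set X :=
  {x | x ∈ base ∧ IsLeast {j : ℕ | 0 < j ∧ ∃ i, x ∈ Q i ∧ (σ ^ j) x ∈ Q i} r}

/-- `C_∞`: points that never return to the partition set they lie in. -/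
def Cinf {X ι : Type*} (P : ι → Set X) (σ : Equiv.Perm X) : Set X :=
  {x | ∀ k : ℕ, 0 < k → ¬∃ i, x ∈ P i ∧ (σ ^ k) x ∈ P i}

end PaperTRS
namespace PaperTRS

section Aux

variable {X ι : Type*}

/-- Two points lie in a common set of the family `R`. -/
def sameOn (R : ι → Set X) (x y : X) : Prop := ∃ i, x ∈ R i ∧ y ∈ R i

lemma sameOn.symm {R : ι → Set X} {x y : X} (h : sameOn R x y) : sameOn R y x := by
  obtain ⟨i, hx, hy⟩ := h; exact ⟨i, hy, hx⟩

lemma sameOn_trans {R : ι → Set X} (hd : ∀ i j, i ≠ j → Disjoint (R i) (R j))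
    {x y z : X} (h1 : sameOn R x y) (h2 : sameOn R y z) : sameOn R x z := by
  obtain ⟨i, hx, hy⟩ := h1
  obtain ⟨j, hy', hz⟩ := h2
  rcases eq_or_ne i j with rfl | hij
  · exact ⟨i, hx, hz⟩
  · exact absurd hy' (Set.disjoint_left.mp (hd i j hij) hy)

lemma indicator_mem_partAlg (R : ι → Set X)
    (hd : ∀ i j, i ≠ j → Disjoint (R i) (R j)) (i : ι) :
    (fun z => if z ∈ R i then (1 : ℂ) else 0) ∈ partAlg R := by
  intro j x hx y hy
  rcases eq_or_ne j i with rfl | hij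
  · simp [hx, hy]
  · have hx' : x ∉ R i := fun h => Set.disjoint_left.mp (hd j i hij) hx h
    have hy' : y ∉ R i := fun h => Set.disjoint_left.mp (hd j i hij) hy h
    simp [hx', hy']

lemma exists_mem_of_cover {R : ι → Set X} (hcov : ⋃ i, R i = Set.univ) (x : X) :
    ∃ i, x ∈ R i := by
  have : x ∈ ⋃ i, R i := hcov.symm ▸ Set.mem_univ x
  exact Set.mem_iUnion.mp this

lemma sep_iff {R : ι → Set X} (hd : ∀ i j, i ≠ j → Disjoint (R i) (R j))
    (hcov : ⋃ i, R i = Set.univ) (σ : Equiv.Perm X) (n : ℤ) (x : X) :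
    x ∈ Sep (partAlg R) σ n ↔ ¬ sameOn R x ((σ ^ n)⁻¹ x) := by
  constructor
  · rintro ⟨h, hh, hne⟩ ⟨i, hx, hy⟩
    exact hne (hh i x hx _ hy)
  · intro hns
    obtain ⟨i, hx⟩ := exists_mem_of_cover hcov x
    refine ⟨fun z => if z ∈ R i then 1 else 0, indicator_mem_partAlg R hd i, ?_⟩
    have hy : (σ ^ n)⁻¹ x ∉ R i := fun h => hns ⟨i, hx, h⟩
    simp [hx]
    exact hy

lemma sameOn_apply_iff {R : ι → Set X} (hd : ∀ i j, i ≠ j → Disjoint (R i) (R j))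
    (hcov : ⋃ i, R i = Set.univ) (σ : Equiv.Perm X)
    (h1 : AlgInvariant (partAlg R) σ) (h2 : AlgInvariant (partAlg R) σ.symm)
    (x y : X) : sameOn R (σ x) (σ y) ↔ sameOn R x y := by
  constructor
  · rintro ⟨i, hx, hy⟩
    by_contra hns
    obtain ⟨j, hxj⟩ := exists_mem_of_cover hcov x
    have hyj : y ∉ R j := fun h => hns ⟨j, hxj, h⟩
    have hmem := h2 _ (indicator_mem_partAlg R hd j)
    have := hmem i (σ x) hx (σ y) hy
    simp only [Function.comp_apply, Equiv.symm_apply_apply] at this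
    simp [hxj, hyj] at this
  · rintro ⟨i, hx, hy⟩
    by_contra hns
    obtain ⟨j, hxj⟩ := exists_mem_of_cover hcov (σ x)
    have hyj : σ y ∉ R j := fun h => hns ⟨j, hxj, h⟩
    have hmem := h1 _ (indicator_mem_partAlg R hd j)
    have := hmem i x hx y hy
    simp only [Function.comp_apply] at this
    simp [hxj, hyj] at this

lemma sameOn_zpow_iff {R : ι → Set X} (hd : ∀ i j, i ≠ j → Disjoint (R i) (R j))
    (hcov : ⋃ i, R i = Set.univ) (σ : Equiv.Perm X)
    (h1 : AlgInvariant (partAlg R) σ) (h2 : AlgInvariant (partAlg R) σ.symm)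
    (m : ℤ) : ∀ x y : X, sameOn R ((σ ^ m) x) ((σ ^ m) y) ↔ sameOn R x y := by
  induction m using Int.induction_on with
  | zero => simp
  | succ k ih =>
    intro x y
    have e : ∀ z : X, (σ ^ ((k : ℤ) + 1)) z = (σ ^ (k : ℤ)) (σ z) := by
      intro z
      rw [zpow_add_one]
      rfl
    rw [e x, e y, ih (σ x) (σ y), sameOn_apply_iff hd hcov σ h1 h2]
  | pred k ih =>
    intro x y
    have e : ∀ z : X, (σ ^ (-(k : ℤ) - 1)) z = (σ ^ (-(k : ℤ))) (σ.symm z) := by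
      intro z
      rw [zpow_sub_one]
      rfl
    rw [e x, e y, ih (σ.symm x) (σ.symm y)]
    constructor
    · intro h
      have := (sameOn_apply_iff hd hcov σ h1 h2 (σ.symm x) (σ.symm y)).mpr h
      simpa using this
    · intro h
      have : sameOn R (σ (σ.symm x)) (σ (σ.symm y)) := by simpa using h
      exact (sameOn_apply_iff hd hcov σ h1 h2 _ _).mp this

/-- The return times of `x` to its own piece form an additive subgroup of `ℤ`. -/
def retSub (R : ι → Set X) (hd : ∀ i j, i ≠ j → Disjoint (R i) (R j))
    (hcov : ⋃ i, R i = Set.univ) (σ : Equiv.Perm X)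
    (h1 : AlgInvariant (partAlg R) σ) (h2 : AlgInvariant (partAlg R) σ.symm)
    (x : X) : AddSubgroup ℤ where
  carrier := {m | sameOn R x ((σ ^ m) x)}
  zero_mem' := by
    obtain ⟨i, hx⟩ := exists_mem_of_cover hcov x
    exact ⟨i, hx, by simpa using hx⟩
  add_mem' := by
    intro a b ha hb
    have hb' : sameOn R ((σ ^ a) x) ((σ ^ a) ((σ ^ b) x)) :=
      (sameOn_zpow_iff hd hcov σ h1 h2 a _ _).mpr hb
    have e : (σ ^ a) ((σ ^ b) x) = (σ ^ (a + b)) x := by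
      rw [zpow_add]; rfl
    rw [e] at hb'
    exact sameOn_trans hd ha hb'
  neg_mem' := by
    intro a ha
    have := (sameOn_zpow_iff hd hcov σ h1 h2 (-a) _ _).mpr ha
    have e : (σ ^ (-a)) ((σ ^ a) x) = x := by
      rw [← Equiv.Perm.mul_apply, ← zpow_add, neg_add_cancel, zpow_zero, Equiv.Perm.one_apply]
    rw [e] at this
    exact this.symm

lemma min_dvd_of_addsubgroup (T : AddSubgroup ℤ) {k : ℤ} (hk : k ∈ T) (hkpos : 0 < k)
    (hmin : ∀ m ∈ T, 0 < m → k ≤ m) (n : ℤ) : n ∈ T ↔ k ∣ n := by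
  constructor
  · intro hn
    have hmem : n % k ∈ T := by
      have h1 : n - (n / k) • k ∈ T := T.sub_mem hn (T.zsmul_mem hk (n / k))
      have : n % k = n - (n / k) • k := by
        rw [smul_eq_mul, mul_comm, Int.emod_def]
      rwa [this]
    rcases lt_trichotomy (n % k) 0 with h | h | h
    · exact absurd (Int.emod_nonneg n (ne_of_gt hkpos)) (not_le.mpr h)
    · exact Int.dvd_of_emod_eq_zero h
    · exact absurd (Int.emod_lt_of_pos n hkpos) (not_lt.mpr (hmin _ hmem h))
  · rintro ⟨c, rfl⟩
    have := T.zsmul_mem hk c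
    rwa [smul_eq_mul, mul_comm] at this

end Aux

end PaperTRS
namespace PaperTRS

section Aux2

variable {X : Type*}

lemma sum_single_apply' {M : Type*} [AddCommMonoid M] (f : ℤ →₀ M)
    (g : ℤ → M → (X → ℂ)) (hg : ∀ n, g n 0 = 0) (d : ℤ) :
    (f.sum fun n v => Finsupp.single n (g n v)) d = g d (f d) := by
  classical
  rw [Finsupp.sum_apply]
  rw [Finsupp.sum]
  have : ∀ n ∈ f.support, (Finsupp.single n (g n (f n)) : ℤ →₀ (X → ℂ)) d
      = if n = d then g n (f n) else 0 := by
    intro n _; rw [Finsupp.single_apply]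
  rw [Finset.sum_congr rfl this, Finset.sum_ite_eq' f.support d fun n => g n (f n)]
  by_cases hd : d ∈ f.support
  · simp [hd]
  · simp only [hd, if_false]
    rw [Finsupp.notMem_support_iff.mp hd, hg]

lemma cmul_single_right (σ : Equiv.Perm X) (f : ℤ →₀ (X → ℂ)) (a : X → ℂ) (d : ℤ) :
    cmul σ f (Finsupp.single 0 a) d = fun x => f d x * a ((σ ^ d)⁻¹ x) := by
  classical
  unfold cmul
  have e1 : ∀ n : ℤ, ∀ fn : X → ℂ,
      ((Finsupp.single 0 a).sum fun m b =>
        Finsupp.single (n + m) (fun x => fn x * b ((σ ^ n)⁻¹ x)))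
      = Finsupp.single n (fun x => fn x * a ((σ ^ n)⁻¹ x)) := by
    intro n fn
    rw [Finsupp.sum_single_index]
    · rw [add_zero]
    · have : (fun x => fn x * (0 : X → ℂ) ((σ ^ n)⁻¹ x)) = (0 : X → ℂ) := by
        funext x; simp
      rw [this, Finsupp.single_zero]
  have : (f.sum fun n fn => (Finsupp.single 0 a).sum fun m b =>
        Finsupp.single (n + m) (fun x => fn x * b ((σ ^ n)⁻¹ x)))
      = f.sum fun n fn => Finsupp.single n (fun x => fn x * a ((σ ^ n)⁻¹ x)) := by
    apply Finsupp.sum_congr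
    intro n _
    exact e1 n (f n)
  rw [this, sum_single_apply']
  intro n; funext x; simp

lemma cmul_single_left (σ : Equiv.Perm X) (f : ℤ →₀ (X → ℂ)) (a : X → ℂ) (d : ℤ) :
    cmul σ (Finsupp.single 0 a) f d = fun x => a x * f d x := by
  classical
  unfold cmul
  rw [Finsupp.sum_single_index]
  · have : (f.sum fun m fm => Finsupp.single ((0 : ℤ) + m)
        (fun x => a x * fm ((σ ^ (0 : ℤ))⁻¹ x)))
        = f.sum fun m fm => Finsupp.single m (fun x => a x * fm x) := by
      apply Finsupp.sum_congr
      intro m _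
      simp
    rw [this, sum_single_apply']
    intro n; funext x; simp
  · have : (fun m fm => Finsupp.single ((0:ℤ) + m)
        (fun x => (0 : X → ℂ) x * fm ((σ ^ (0:ℤ))⁻¹ x))) = (fun m (fm : X → ℂ) => (0 : ℤ →₀ (X → ℂ))) := by
      funext m fm
      have : (fun x => (0 : X → ℂ) x * fm ((σ ^ (0:ℤ))⁻¹ x)) = (0 : X → ℂ) := by
        funext x; simp
      rw [this, Finsupp.single_zero]
    rw [this]; exact Finset.sum_const_zero

lemma mem_commutant_iff (A B : Subalgebra ℂ (X → ℂ)) (σ : Equiv.Perm X)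
    (f : ℤ →₀ (X → ℂ)) :
    f ∈ commutant A B σ ↔ InCrossed B f ∧ ∀ n : ℤ, ∀ x, x ∈ Sep A σ n → f n x = 0 := by
  constructor
  · rintro ⟨hB, hc⟩
    refine ⟨hB, ?_⟩
    rintro n x ⟨h, hhA, hne⟩
    have heq := hc h hhA
    have hval : f n x * h ((σ ^ n)⁻¹ x) = h x * f n x := by
      have := congrFun ((Finsupp.ext_iff.mp heq) n) x
      rwa [cmul_single_right, cmul_single_left] at this
    by_contra hz
    apply hne
    have : f n x * h x = f n x * h ((σ ^ n)⁻¹ x) := by rw [hval]; ring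
    exact mul_left_cancel₀ hz this
  · rintro ⟨hB, hv⟩
    refine ⟨hB, ?_⟩
    intro a ha
    apply Finsupp.ext
    intro d
    rw [cmul_single_right, cmul_single_left]
    funext x
    by_cases hx : x ∈ Sep A σ d
    · rw [hv d x hx]; ring
    · have : a x = a ((σ ^ d)⁻¹ x) := by
        by_contra hne
        exact hx ⟨a, ha, hne⟩
      rw [← this]; ring

end Aux2

end PaperTRS
namespace PaperTRS

/-- refining exactly one partition set `X₀ = P i₀` into `s` nonempty disjoint
subsets `Q r` (with `𝒜` and `𝒜_S` invariant under `σ` and `σ⁻¹`, so `σ(X₀) = X₀`),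
`Sepⁿ_{𝒜_S}(X) = Sepⁿ_𝒜(X) ∪ ⋃_{k ∤ n} C̃_k` for every `n`, and the commutants in
`𝒜_S ⋊_σ̃ ℤ` satisfy `𝒜_S' = 𝒜' \ {Σ fₙδⁿ : fₙ ≢ 0 on C̃_k for some n, k with k ∤ n}`. -/
theorem statement14 {X J : Type*} [Countable J] (P : J → Set X)
    (hne : ∀ i, (P i).Nonempty)
    (hdisj : ∀ i j, i ≠ j → Disjoint (P i) (P j))
    (hcover : ⋃ i, P i = Set.univ)
    (i₀ : J) (s : ℕ) (Q : Fin s → Set X)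
    (hQne : ∀ r, (Q r).Nonempty)
    (hQdisj : ∀ r r' : Fin s, r ≠ r' → Disjoint (Q r) (Q r'))
    (hQcover : ⋃ r, Q r = P i₀)
    (σ : Equiv.Perm X)
    (h1 : AlgInvariant (partAlg P) σ)
    (h2 : AlgInvariant (partAlg P) σ.symm)
    (h3 : AlgInvariant
      (partAlg (Sum.elim (fun i : {i : J // i ≠ i₀} => P i.1) Q)) σ)
    (h4 : AlgInvariant
      (partAlg (Sum.elim (fun i : {i : J // i ≠ i₀} => P i.1) Q)) σ.symm) :
    (∀ n : ℤ,
      Sep (partAlg (Sum.elim (fun i : {i : J // i ≠ i₀} => P i.1) Q)) σ n =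
        Sep (partAlg P) σ n ∪
          ⋃ (k : ℕ) (_ : 0 < k ∧ ¬((k : ℤ) ∣ n)), CtilGen σ Q (P i₀) k) ∧
    commutant (partAlg (Sum.elim (fun i : {i : J // i ≠ i₀} => P i.1) Q))
        (partAlg (Sum.elim (fun i : {i : J // i ≠ i₀} => P i.1) Q)) σ =
      commutant (partAlg P)
          (partAlg (Sum.elim (fun i : {i : J // i ≠ i₀} => P i.1) Q)) σ \
        {f : ℤ →₀ (X → ℂ) | ∃ n : ℤ, ∃ k : ℕ, 0 < k ∧ ¬((k : ℤ) ∣ n) ∧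
          ¬(∀ x ∈ CtilGen σ Q (P i₀) k, f n x = 0)} := by
  classical
  set R : ({i : J // i ≠ i₀} ⊕ Fin s) → Set X :=
    Sum.elim (fun i : {i : J // i ≠ i₀} => P i.1) Q with hRdef
  -- basic facts
  have hQsub : ∀ r, Q r ⊆ P i₀ := by
    intro r x hx
    rw [← hQcover]
    exact Set.mem_iUnion.mpr ⟨r, hx⟩
  have hmemP : ∀ i x, x ∈ P i → x ∈ P i₀ → i = i₀ := by
    intro i x hx hx0
    by_contra hne'
    exact Set.disjoint_left.mp (hdisj i i₀ hne') hx hx0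
  have hRd : ∀ a b, a ≠ b → Disjoint (R a) (R b) := by
    rintro (⟨i, hi⟩ | r) (⟨j, hj⟩ | r') hab
    · have hij : i ≠ j := by
        intro h; apply hab; subst h; rfl
      exact hdisj i j hij
    · exact (hdisj i i₀ hi).mono_right (hQsub r')
    · exact ((hdisj j i₀ hj).mono_right (hQsub r)).symm
    · have hrr : r ≠ r' := by
        intro h; apply hab; subst h; rfl
      exact hQdisj r r' hrr
  have hRcov : ⋃ a, R a = Set.univ := by
    rw [Set.eq_univ_iff_forall]
    intro x
    obtain ⟨i, hi⟩ := exists_mem_of_cover hcover x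
    rcases eq_or_ne i i₀ with rfl | hne'
    · have : x ∈ ⋃ r, Q r := by rw [hQcover]; exact hi
      obtain ⟨r, hr⟩ := Set.mem_iUnion.mp this
      exact Set.mem_iUnion.mpr ⟨Sum.inr r, hr⟩
    · exact Set.mem_iUnion.mpr ⟨Sum.inl ⟨i, hne'⟩, hi⟩
  have hRtoP : ∀ x y, sameOn R x y → sameOn P x y := by
    rintro x y (⟨⟨i, hi⟩ | r, hx, hy⟩)
    · exact ⟨i, hx, hy⟩
    · exact ⟨i₀, hQsub r hx, hQsub r hy⟩
  have hmemQ : ∀ x, x ∈ P i₀ → ∀ y, (sameOn R x y ↔ ∃ r, x ∈ Q r ∧ y ∈ Q r) := by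
    intro x hx0 y
    constructor
    · rintro (⟨⟨i, hi⟩ | r, hx, hy⟩)
      · exact absurd (hmemP i x hx hx0) hi
      · exact ⟨r, hx, hy⟩
    · rintro ⟨r, hx, hy⟩
      exact ⟨Sum.inr r, hx, hy⟩
  have ecomp : ∀ u v : ℤ, ∀ z : X, (σ ^ u) ((σ ^ v) z) = (σ ^ (u + v)) z := by
    intro u v z
    rw [← Equiv.Perm.mul_apply, ← zpow_add]
  -- existence of a positive refined return time
  have hpos : ∀ x, x ∈ P i₀ → ∀ m : ℤ, m ≠ 0 → sameOn P x ((σ ^ m) x) →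
      ∃ j : ℕ, 0 < j ∧ sameOn R x ((σ ^ (j : ℤ)) x) := by
    intro x hx0 m hm hsame
    set TP := retSub P hdisj hcover σ h1 h2 x with hTP
    have hmT : m ∈ TP := hsame
    have habs : ((m.natAbs : ℤ)) ∈ TP := by
      rcases Int.natAbs_eq m with h | h
      · rw [← h]; exact hmT
      · have : -m ∈ TP := TP.neg_mem hmT
        have e : ((m.natAbs : ℤ)) = -m := by omega
        rw [e]; exact this
    set k₀ := m.natAbs with hk₀def
    have hk₀pos : 0 < k₀ := Int.natAbs_pos.mpr hm
    have hiter : ∀ j : ℕ, (σ ^ ((j : ℤ) * (k₀ : ℤ))) x ∈ P i₀ := by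
      intro j
      have hj : ((j : ℤ) * (k₀ : ℤ)) ∈ TP := by
        have := TP.zsmul_mem habs (j : ℤ)
        rwa [smul_eq_mul] at this
      obtain ⟨i, hxi, hyi⟩ := (hj : sameOn P x _)
      have := hmemP i x hxi hx0
      subst this
      exact hyi
    have hchoice : ∀ j : ℕ, ∃ r, (σ ^ ((j : ℤ) * (k₀ : ℤ))) x ∈ Q r := by
      intro j
      have := hiter j
      rw [← hQcover] at this
      exact Set.mem_iUnion.mp this
    choose rj hrj using hchoice
    have hcard : Fintype.card (Fin s) < Fintype.card (Fin (s + 1)) := by simp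
    obtain ⟨a, b, hab, hr⟩ :=
      Fintype.exists_ne_map_eq_of_card_lt (fun j : Fin (s + 1) => rj j) hcard
    have claim : ∀ a b : Fin (s + 1), (a : ℕ) < (b : ℕ) → rj a = rj b →
        ∃ j : ℕ, 0 < j ∧ sameOn R x ((σ ^ (j : ℤ)) x) := by
      intro a b hlt hre
      have hs' : sameOn R ((σ ^ ((a : ℤ) * (k₀ : ℤ))) x) ((σ ^ ((b : ℤ) * (k₀ : ℤ))) x) :=
        ⟨Sum.inr (rj a), hrj a, by rw [hre]; exact hrj b⟩
      have hshift := (sameOn_zpow_iff hRd hRcov σ h3 h4 (-((a : ℤ) * (k₀ : ℤ))) _ _).mpr hs'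
      rw [ecomp, ecomp] at hshift
      refine ⟨((b : ℕ) - (a : ℕ)) * k₀, Nat.mul_pos (by omega) hk₀pos, ?_⟩
      have e1 : -((a : ℤ) * (k₀ : ℤ)) + (a : ℤ) * (k₀ : ℤ) = 0 := by ring
      have e2 : -((a : ℤ) * (k₀ : ℤ)) + (b : ℤ) * (k₀ : ℤ)
          = ((((b : ℕ) - (a : ℕ)) * k₀ : ℕ) : ℤ) := by
        push_cast [Nat.cast_sub hlt.le]
        ring
      rw [e1, e2] at hshift
      rw [zpow_zero] at hshift
      simpa using hshift
    rcases Nat.lt_or_ge (a : ℕ) (b : ℕ) with hlt | hge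
    · exact claim a b hlt hr
    · have hlt' : (b : ℕ) < (a : ℕ) := by
        rcases Nat.lt_or_ge (b : ℕ) (a : ℕ) with h | h
        · exact h
        · exact absurd (Fin.ext (le_antisymm h hge)) hab
      exact claim b a hlt' hr.symm
  -- part 1
  have part1 : ∀ n : ℤ,
      Sep (partAlg R) σ n =
        Sep (partAlg P) σ n ∪
          ⋃ (k : ℕ) (_ : 0 < k ∧ ¬((k : ℤ) ∣ n)), CtilGen σ Q (P i₀) k := by
    intro n
    ext x
    rw [Set.mem_union, sep_iff hRd hRcov, sep_iff hdisj hcover]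
    have hyx : (σ ^ n)⁻¹ x = (σ ^ (-n)) x := by rw [zpow_neg]
    rw [hyx]
    have hU : (x ∈ ⋃ (k : ℕ) (_ : 0 < k ∧ ¬((k : ℤ) ∣ n)), CtilGen σ Q (P i₀) k)
        ↔ ∃ k : ℕ, (0 < k ∧ ¬((k : ℤ) ∣ n)) ∧ x ∈ CtilGen σ Q (P i₀) k := by
      simp [Set.mem_iUnion]
    rw [hU]
    by_cases hx0 : x ∈ P i₀
    · by_cases hy0 : (σ ^ (-n)) x ∈ P i₀
      · have hsP : sameOn P x ((σ ^ (-n)) x) := ⟨i₀, hx0, hy0⟩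
        rcases eq_or_ne n 0 with rfl | hn
        · have hsR : sameOn R x ((σ ^ (-(0 : ℤ))) x) := by
            obtain ⟨r, hr⟩ := Set.mem_iUnion.mp (by rw [hQcover]; exact hx0 :
              x ∈ ⋃ r, Q r)
            exact (hmemQ x hx0 _).mpr ⟨r, hr, by simpa using hr⟩
          constructor
          · intro h; exact absurd hsR h
          · rintro (h | ⟨k, ⟨hk, hkd⟩, _⟩)
            · exact absurd hsP h
            · exact absurd (dvd_zero _) hkd
        · -- n ≠ 0 : the interesting case
          obtain ⟨j₁, hj₁pos, hj₁⟩ := hpos x hx0 (-n) (by omega) hsP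
          set TR := retSub R hRd hRcov σ h3 h4 x with hTRdef
          set Sx := {j : ℕ | 0 < j ∧ ∃ i, x ∈ Q i ∧ (σ ^ j) x ∈ Q i} with hSxdef
          have hSx : ∀ j : ℕ, j ∈ Sx ↔ (0 < j ∧ sameOn R x ((σ ^ (j : ℤ)) x)) := by
            intro j
            simp only [hSxdef, Set.mem_setOf_eq]
            refine and_congr_right fun _ => ?_
            rw [zpow_natCast]
            exact ((hmemQ x hx0 _)).symm
          have hSne : ∃ j, j ∈ Sx := ⟨j₁, (hSx j₁).mpr ⟨hj₁pos, hj₁⟩⟩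
          set kx := Nat.find hSne with hkxdef
          have hkleast : IsLeast Sx kx :=
            ⟨Nat.find_spec hSne, fun j hj => Nat.find_min' hSne hj⟩
          have hkxpos : 0 < kx := ((hSx kx).mp hkleast.1).1
          have hdvd : ∀ nn : ℤ, sameOn R x ((σ ^ nn) x) ↔ ((kx : ℤ) ∣ nn) := by
            intro nn
            have hkT : (kx : ℤ) ∈ TR := ((hSx kx).mp hkleast.1).2
            have hmin : ∀ m ∈ TR, 0 < m → (kx : ℤ) ≤ m := by
              intro m hm hmpos
              have he : ((m.toNat : ℤ)) = m := Int.toNat_of_nonneg hmpos.le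
              have : m.toNat ∈ Sx := (hSx m.toNat).mpr
                ⟨by omega, by rw [he]; exact hm⟩
              have := hkleast.2 this
              omega
            exact min_dvd_of_addsubgroup TR hkT (by exact_mod_cast hkxpos) hmin nn
          have hCt : ∀ k : ℕ, x ∈ CtilGen σ Q (P i₀) k ↔ k = kx := by
            intro k
            constructor
            · rintro ⟨-, hl⟩
              exact hl.unique hkleast
            · rintro rfl
              exact ⟨hx0, hkleast⟩
          have hnSepA : sameOn P x ((σ ^ (-n)) x) := hsP
          constructor
          · intro h
            right
            refine ⟨kx, ⟨hkxpos, ?_⟩, (hCt kx).mpr rfl⟩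
            intro hd
            apply h
            exact (hdvd (-n)).mpr (dvd_neg.mpr hd)
          · rintro (h | ⟨k, ⟨hk, hkd⟩, hmem⟩)
            · exact absurd hnSepA h
            · have hk' : k = kx := (hCt k).mp hmem
              subst hk'
              intro hsR
              have := (hdvd (-n)).mp hsR
              exact hkd (dvd_neg.mp this)
      · -- x ∈ P i₀, y ∉ P i₀ : both sides true
        constructor
        · intro _
          left
          rintro ⟨i, hxi, hyi⟩
          have := hmemP i x hxi hx0
          subst this
          exact hy0 hyi
        · intro _
          rintro hsR
          obtain ⟨r, -, hy⟩ := (hmemQ x hx0 _).mp hsR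
          exact hy0 (hQsub r hy)
    · -- x ∉ P i₀
      have hnoC : ∀ k, x ∉ CtilGen σ Q (P i₀) k := by
        rintro k ⟨hx, -⟩
        exact hx0 hx
      have hiff : sameOn R x ((σ ^ (-n)) x) ↔ sameOn P x ((σ ^ (-n)) x) := by
        constructor
        · exact hRtoP _ _
        · rintro ⟨i, hx, hy⟩
          have hi : i ≠ i₀ := fun h => hx0 (h ▸ hx)
          exact ⟨Sum.inl ⟨i, hi⟩, hx, hy⟩
      rw [hiff]
      constructor
      · exact fun h => Or.inl h
      · rintro (h | ⟨k, -, hmem⟩)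
        · exact h
        · exact absurd hmem (hnoC k)
  refine ⟨part1, ?_⟩
  -- part 2
  ext f
  rw [Set.mem_diff, mem_commutant_iff, mem_commutant_iff, Set.mem_setOf_eq]
  constructor
  · rintro ⟨hB, hv⟩
    refine ⟨⟨hB, ?_⟩, ?_⟩
    · intro n x hx
      exact hv n x (by rw [part1 n]; exact Or.inl hx)
    · rintro ⟨n, k, hk, hkn, hnv⟩
      apply hnv
      intro x hx
      refine hv n x ?_
      rw [part1 n]
      right
      exact Set.mem_iUnion.mpr ⟨k, Set.mem_iUnion.mpr ⟨⟨hk, hkn⟩, hx⟩⟩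
  · rintro ⟨⟨hB, hv⟩, hbad⟩
    refine ⟨hB, ?_⟩
    intro n x hx
    rw [part1 n] at hx
    rcases hx with h | h
    · exact hv n x h
    · simp only [Set.mem_iUnion] at h
      obtain ⟨k, ⟨hk, hkn⟩, hxk⟩ := h
      by_contra hz
      exact hbad ⟨n, k, hk, hkn, fun hall => hz (hall x hxk)⟩

end PaperTRS
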